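/- Let L ∈ ℤ, and let ψ : Γ × Γ × G/N → U(1) and ψ̂ : Γ × Γ × Ĝ/N⊥ → U(1) satisfy ψ(a, b, z) · ψ̂(a, b, ẑ)⁻¹ = ((χ⊔χ̂)(a, b, z, ẑ))^L for all a, b ∈ Γ, z ∈ G/N, ẑ ∈ Ĝ/N⊥. Then: (i) ψ̂(a, b, ẑ) = ψ(a, b, 0) · γ(a,b)^{−L} · ⟨ẑ, η(a,b)⟩^{−L}; (ii) for all g ∈ G and z ∈ G/N: ψ(a, b, z + π(g)) · ψ(a, b, z)⁻¹ = ⟨η̂(a,b), π(g)⟩^{−L} = φ(b, g, z + χ(a)) · φ(ba, g, z)⁻¹ · φ(a, g, z), where φ(a, g, z) := ⟨σ̂(χ̂(a)), g⟩^{−L}; (iii) for all ĝ ∈ Ĝ and ẑ ∈ Ĝ/N⊥: ψ̂(a, b, ẑ + π̂(ĝ)) · ψ̂(a, b, ẑ)⁻¹ = ⟨ĝ, η(a,b)⟩^{−L} = φ̂(b, ĝ, ẑ + χ̂(a)) · φ̂(ba, ĝ, ẑ)⁻¹ · φ̂(a, ĝ, ẑ), where φ̂(a, ĝ, ẑ)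 := ⟨ĝ, σ(χ(a))⟩^{−L}. -/

import Mathlib

/-- Let `L ∈ ℤ`, and suppose `ψ` and `ψ̂` satisfy the regularity equation
`ψ(a,b,z) · ψ̂(a,b,ẑ)⁻¹ = ((χ⊔χ̂)(a,b,z,ẑ))^L`.  Then
(i)   `ψ̂(a,b,ẑ) = ψ(a,b,0) · γ(a,b)^{−L} · ⟨ẑ, η(a,b)⟩^{−L}`;
(ii)  `ψ(a,b,z+π(g)) · ψ(a,b,z)⁻¹ = ⟨η̂(a,b), π(g)⟩^{−L}
       = φ(b,g,z+χ(a)) · φ(ba,g,z)⁻¹ · φ(a,g,z)` with `φ(a,g,z) := ⟨σ̂(χ̂(a)), g⟩^{−L}`;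
(iii) `ψ̂(a,b,ẑ+π̂(ĝ)) · ψ̂(a,b,ẑ)⁻¹ = ⟨ĝ, η(a,b)⟩^{−L}
       = φ̂(b,ĝ,ẑ+χ̂(a)) · φ̂(ba,ĝ,ẑ)⁻¹ · φ̂(a,ĝ,ẑ)` with `φ̂(a,ĝ,ẑ) := ⟨ĝ, σ(χ(a))⟩^{−L}`. -/
theorem statement8
    {Γ : Type*} [Group Γ] [Finite Γ]
    {G : Type*} [AddCommGroup G] [TopologicalSpace G] [IsTopologicalAddGroup G]
      [LocallyCompactSpace G] [SecondCountableTopology G] [T2Space G]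
    (N : AddSubgroup G) [DiscreteTopology N] [CompactSpace (G ⧸ N)]
    -- the Pontryagin dual of `G`, abstracted by its pairing with `G`
    {Ghat : Type*} [AddCommGroup Ghat]
    (e : Ghat → G → Circle)
    (he₁ : ∀ (x y : Ghat) (g : G), e (x + y) g = e x g * e y g)
    (he₂ : ∀ (x : Ghat) (g h : G), e x (g + h) = e x g * e x h)
    -- the annihilator `N⊥` of `N`
    (Nperp : AddSubgroup Ghat)
    (hNperp : ∀ x : Ghat, x ∈ Nperp ↔ ∀ n ∈ N, e x (n : G) = 1)
    -- the well-defined pairing of `Ĝ/N⊥` with `N`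
    (eQN : Ghat ⧸ Nperp → N → Circle)
    (heQN : ∀ (x : Ghat) (n : N), eQN (x : Ghat ⧸ Nperp) n = e x (n : G))
    -- the well-defined pairing of `N⊥` with `G/N`
    (ePQ : Nperp → G ⧸ N → Circle)
    (hePQ : ∀ (p : Nperp) (g : G), ePQ p ((g : G) : G ⧸ N) = e (p : Ghat) g)
    -- the homomorphisms `χ` and `χ̂`
    (χ : Γ → G ⧸ N) (hχ : ∀ a b : Γ, χ (a * b) = χ a + χ b)
    (χhat : Γ → Ghat ⧸ Nperp) (hχhat : ∀ a b : Γ, χhat (a * b) = χhat a + χhat b)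
    -- set-theoretic sections `σ` and `σ̂` of the quotient maps
    (σ : G ⧸ N → G) (hσ : ∀ z : G ⧸ N, ((σ z : G) : G ⧸ N) = z)
    (σh : Ghat ⧸ Nperp → Ghat) (hσh : ∀ zh : Ghat ⧸ Nperp, ((σh zh : Ghat) : Ghat ⧸ Nperp) = zh)
    -- `η(a,b) ∈ N` and `η̂(a,b) ∈ N⊥`
    (hη : ∀ a b : Γ, σ (χ b) - σ (χ (b * a)) + σ (χ a) ∈ N)
    (hηhat : ∀ a b : Γ, σh (χhat b) - σh (χhat (b * a)) + σh (χhat a) ∈ Nperp)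
    -- `γ` and the cocycle `χ⊔χ̂`
    (γ : Γ → Γ → Circle)
    (hγ : ∀ a b : Γ, γ a b = e (σh (χhat a)) (σ (χ b)) *
      (ePQ ⟨σh (χhat b) - σh (χhat (b * a)) + σh (χhat a), hηhat a b⟩ (χ (b * a)))⁻¹)
    (sq : Γ → Γ → G ⧸ N → Ghat ⧸ Nperp → Circle)
    (hsq : ∀ (a b : Γ) (z : G ⧸ N) (zh : Ghat ⧸ Nperp),
      sq a b z zh = γ a b *
        (ePQ ⟨σh (χhat b) - σh (χhat (b * a)) + σh (χhat a), hηhat a b⟩ z)⁻¹ *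
        eQN zh ⟨σ (χ b) - σ (χ (b * a)) + σ (χ a), hη a b⟩)
    -- the regularity equation of order `L`
    (L : ℤ)
    (ψ : Γ → Γ → (G ⧸ N) → Circle) (ψhat : Γ → Γ → (Ghat ⧸ Nperp) → Circle)
    (hreg : ∀ (a b : Γ) (z : G ⧸ N) (zh : Ghat ⧸ Nperp),
      ψ a b z * (ψhat a b zh)⁻¹ = (sq a b z zh) ^ L)
    -- `φ(a,g,z) := ⟨σ̂(χ̂(a)), g⟩^{−L}` and `φ̂(a,ĝ,ẑ) := ⟨ĝ, σ(χ(a))⟩^{−L}`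
    (φ : Γ → G → (G ⧸ N) → Circle)
    (hφ : ∀ (a : Γ) (g : G) (z : G ⧸ N), φ a g z = (e (σh (χhat a)) g) ^ (-L))
    (φhat : Γ → Ghat → (Ghat ⧸ Nperp) → Circle)
    (hφhat : ∀ (a : Γ) (gh : Ghat) (zh : Ghat ⧸ Nperp),
      φhat a gh zh = (e gh (σ (χ a))) ^ (-L)) :
    -- (i)
    (∀ (a b : Γ) (zh : Ghat ⧸ Nperp),
      ψhat a b zh = ψ a b 0 * (γ a b) ^ (-L) *
        (eQN zh ⟨σ (χ b) - σ (χ (b * a)) + σ (χ a), hη a b⟩) ^ (-L)) ∧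
    -- (ii)
    (∀ (a b : Γ) (g : G) (z : G ⧸ N),
      ψ a b (z + (g : G ⧸ N)) * (ψ a b z)⁻¹ =
        (ePQ ⟨σh (χhat b) - σh (χhat (b * a)) + σh (χhat a), hηhat a b⟩
          ((g : G) : G ⧸ N)) ^ (-L) ∧
      (ePQ ⟨σh (χhat b) - σh (χhat (b * a)) + σh (χhat a), hηhat a b⟩
          ((g : G) : G ⧸ N)) ^ (-L) =
        φ b g (z + χ a) * (φ (b * a) g z)⁻¹ * φ a g z) ∧
    -- (iii)
    (∀ (a b : Γ) (gh : Ghat) (zh : Ghat ⧸ Nperp),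
      ψhat a b (zh + (gh : Ghat ⧸ Nperp)) * (ψhat a b zh)⁻¹ =
        (e gh (σ (χ b) - σ (χ (b * a)) + σ (χ a))) ^ (-L) ∧
      (e gh (σ (χ b) - σ (χ (b * a)) + σ (χ a))) ^ (-L) =
        φhat b gh (zh + χhat a) * (φhat (b * a) gh zh)⁻¹ * φhat a gh zh) := by
  have he0l : ∀ g : G, e 0 g = 1 := by
    intro g
    have h := he₁ 0 0 g
    rw [add_zero] at h
    exact left_eq_mul.mp h
  have he0r : ∀ x : Ghat, e x 0 = 1 := by
    intro x
    have h := he₂ x 0 0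
    rw [add_zero] at h
    exact left_eq_mul.mp h
  have henegl : ∀ (x : Ghat) (g : G), e (-x) g = (e x g)⁻¹ := by
    intro x g
    have h := he₁ x (-x) g
    rw [add_neg_cancel, he0l] at h
    exact (inv_eq_of_mul_eq_one_right h.symm).symm
  have henegr : ∀ (x : Ghat) (g : G), e x (-g) = (e x g)⁻¹ := by
    intro x g
    have h := he₂ x g (-g)
    rw [add_neg_cancel, he0r] at h
    exact (inv_eq_of_mul_eq_one_right h.symm).symm
  have heQNadd : ∀ (zh : Ghat ⧸ Nperp) (gh : Ghat) (n : N),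
      eQN (zh + (gh : Ghat ⧸ Nperp)) n = eQN zh n * e gh n := by
    intro zh gh n
    have h1 : zh + (gh : Ghat ⧸ Nperp) = ((σh zh + gh : Ghat) : Ghat ⧸ Nperp) := by
      rw [QuotientAddGroup.mk_add, hσh]
    rw [h1, heQN, he₁, ← heQN, hσh]
  have hePQadd : ∀ (p : Nperp) (z : G ⧸ N) (g : G),
      ePQ p (z + ((g : G) : G ⧸ N)) = ePQ p z * e p g := by
    intro p z g
    have h1 : z + ((g : G) : G ⧸ N) = ((σ z + g : G) : G ⧸ N) := by
      rw [QuotientAddGroup.mk_add, hσ]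
    rw [h1, hePQ, he₂, ← hePQ, hσ]
  have hePQ0 : ∀ p : Nperp, ePQ p (0 : G ⧸ N) = 1 := by
    intro p
    have h : (0 : G ⧸ N) = ((0 : G) : G ⧸ N) := by simp
    rw [h, hePQ, he0r]
  have heQN0 : ∀ n : N, eQN (0 : Ghat ⧸ Nperp) n = 1 := by
    intro n
    have h : (0 : Ghat ⧸ Nperp) = ((0 : Ghat) : Ghat ⧸ Nperp) := by simp
    rw [h, heQN, he0l]
  have hi : ∀ (a b : Γ) (zh : Ghat ⧸ Nperp),
      ψhat a b zh = ψ a b 0 * (γ a b) ^ (-L) *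
        (eQN zh ⟨σ (χ b) - σ (χ (b * a)) + σ (χ a), hη a b⟩) ^ (-L) := by
    intro a b zh
    have h0 := hreg a b 0 zh
    rw [hsq, hePQ0, inv_one, mul_one] at h0
    have h0' := mul_inv_eq_iff_eq_mul.mp h0
    rw [h0']
    simp [mul_zpow, zpow_neg, mul_assoc, mul_comm, mul_left_comm]
  refine ⟨hi, ?_, ?_⟩
  · intro a b g z
    set p : Nperp := ⟨σh (χhat b) - σh (χhat (b * a)) + σh (χhat a), hηhat a b⟩ with hp
    have key : ∀ w : G ⧸ N, ψ a b w = γ a b ^ L * ((ePQ p w) ^ L)⁻¹ * ψhat a b 0 := by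
      intro w
      have h := hreg a b w 0
      rw [hsq, heQN0, mul_one] at h
      have h' := mul_inv_eq_iff_eq_mul.mp h
      rw [h', mul_zpow, inv_zpow]
    constructor
    · rw [key (z + ((g : G) : G ⧸ N)), key z, hePQadd, zpow_neg]
      simp only [mul_zpow, mul_assoc, mul_comm, mul_left_comm, mul_inv_cancel_left,
        inv_mul_cancel_left, mul_inv_rev, inv_inv]
      simp [hePQ, mul_assoc, mul_comm, mul_left_comm]
    · rw [hePQ, hφ, hφ, hφ, hp]
      show (e (σh (χhat b) - σh (χhat (b * a)) + σh (χhat a)) g) ^ (-L) = _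
      rw [sub_eq_add_neg, he₁, he₁, henegl]
      simp [mul_zpow, zpow_neg, mul_assoc, mul_comm, mul_left_comm]
  · intro a b gh zh
    constructor
    · rw [hi a b (zh + (gh : Ghat ⧸ Nperp)), hi a b zh, heQNadd]
      show ψ a b 0 * γ a b ^ (-L) *
          (eQN zh ⟨σ (χ b) - σ (χ (b * a)) + σ (χ a), hη a b⟩ *
            e gh (σ (χ b) - σ (χ (b * a)) + σ (χ a))) ^ (-L) * _ = _
      simp [mul_zpow, zpow_neg, mul_assoc, mul_comm, mul_left_comm]
    · rw [hφhat, hφhat, hφhat, sub_eq_add_neg, he₂, he₂, henegr]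
      simp only [mul_zpow, inv_zpow]
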